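/- In Kleene's first algebra, for every partial multifunction g on ℕ, the partial multifunction Weih_g is computably transparent, and for every partial multifunction f on ℕ one has f ≤_W g if and only if f ≤_m Weih_g. -/

import Mathlib

namespace KleeneOracle

/-- `e ∗ x`: application of the `e`-th partial computable function on ℕ. -/
def ap (e x : ℕ) : Part ℕ :=
  Nat.Partrec.Code.eval (Denumerable.ofNat Nat.Partrec.Code e) x

/-- `e ∗ A := {e ∗ a : a ∈ A}`. -/
def apSet (e : ℕ) (A : Set ℕ) : Set ℕ := {z | ∃ a ∈ A, z ∈ ap e a}

/-- A partial multifunction on ℕ. -/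
abbrev Multifun := ℕ → Part (Set ℕ)

def Transparent (U : Multifun) : Prop :=
  ∃ u : ℕ, ∀ (e x : ℕ) (A : Set ℕ), A ∈ U x → (∀ y ∈ A, (ap e y).Dom) →
    ∃ c ∈ ap u e, ∃ d ∈ ap c x, ∃ B ∈ U d, B ⊆ apSet e A

def Inflationary (U : Multifun) : Prop :=
  ∃ η : ℕ, ∀ x : ℕ, ∃ c ∈ ap η x, ∃ B ∈ U c, B ⊆ {x}

def mcomp (g f : Multifun) : Multifun := fun x =>
  ⟨∃ A ∈ f x, ∀ y ∈ A, (g y).Dom,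
   fun _ => {z | ∃ A ∈ f x, ∃ y ∈ A, ∃ B ∈ g y, z ∈ B}⟩

def Idempotent (U : Multifun) : Prop :=
  ∃ μ : ℕ, ∀ (x : ℕ) (A : Set ℕ), A ∈ mcomp U U x →
    ∃ c ∈ ap μ x, ∃ B ∈ U c, B ⊆ A

def mRed (f g : Multifun) : Prop :=
  ∃ e : ℕ, ∀ (x : ℕ) (A : Set ℕ), A ∈ f x →
    ∃ c ∈ ap e x, ∃ B ∈ g c, B ⊆ A

def wRed (f g : Multifun) : Prop :=
  ∃ em ep : ℕ, ∀ (x : ℕ) (A : Set ℕ), A ∈ f x →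
    ∃ c ∈ ap em x, ∃ B ∈ g c, ∀ y ∈ B, ∃ z ∈ ap ep (Nat.pair x y), z ∈ A

def Weih (g : Multifun) : Multifun := fun w =>
  ⟨∃ c ∈ ap w.unpair.1 w.unpair.2.unpair.2, ∃ B ∈ g c,
     ∀ y ∈ B, (ap w.unpair.2.unpair.1 (Nat.pair w.unpair.2.unpair.2 y)).Dom,
   fun _ => {z | ∃ c ∈ ap w.unpair.1 w.unpair.2.unpair.2, ∃ B ∈ g c,
     ∃ y ∈ B, z ∈ ap w.unpair.2.unpair.1 (Nat.pair w.unpair.2.unpair.2 y)}⟩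

def idsq (g : Multifun) : Multifun := fun w =>
  if w.unpair.1 = 0 then Part.some {w.unpair.2}
  else if w.unpair.1 = 1 then g w.unpair.2
  else Part.none

def pWeih (g : Multifun) : Multifun := Weih (idsq g)

def pwRed (f g : Multifun) : Prop := wRed f (idsq g)

def Med (Q : Set ℕ) : Multifun := fun e =>
  ⟨∀ a ∈ Q, (ap e a).Dom, fun _ => apSet e Q⟩

def MedRed (P Q : Set ℕ) : Prop :=
  ∃ e : ℕ, (∀ a ∈ Q, (ap e a).Dom) ∧ apSet e Q ⊆ P

def constMF (P : Set ℕ) : Multifun := fun _ => Part.some P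

def imp (p q : Set ℕ) : Set ℕ := {e | ∀ x ∈ p, ∃ z ∈ ap e x, z ∈ q}

def OpMonotone (j : Set ℕ → Set ℕ) : Prop :=
  ∃ u : ℕ, ∀ p q : Set ℕ, ∀ a ∈ imp p q, ∃ c ∈ ap u a, c ∈ imp (j p) (j q)

def OpInflationary (j : Set ℕ → Set ℕ) : Prop :=
  ∃ e : ℕ, ∀ p : Set ℕ, e ∈ imp p (j p)

def OpIdempotent (j : Set ℕ → Set ℕ) : Prop :=
  ∃ e : ℕ, ∀ p : Set ℕ, e ∈ imp (j (j p)) (j p)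

def LawvereTierney (j : Set ℕ → Set ℕ) : Prop :=
  OpMonotone j ∧ OpInflationary j ∧ OpIdempotent j

def jU (U : Multifun) (p : Set ℕ) : Set ℕ := {x | ∃ A ∈ U x, A ⊆ p}

def SingleValued (U : Multifun) : Prop := ∀ x : ℕ, ∀ A ∈ U x, ∃ y : ℕ, A = {y}

def presInter (j : Set ℕ → Set ℕ) : Prop :=
  ∀ (ι : Type) [Nonempty ι] (p : ι → Set ℕ), j (⋂ i, p i) = ⋂ i, j (p i)

def presUnion (j : Set ℕ → Set ℕ) : Prop :=
  ∀ (ι : Type) (p : ι → Set ℕ), j (⋃ i, p i) = ⋃ i, j (p i)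

def Uop (j : Set ℕ → Set ℕ) : Multifun := fun x =>
  ⟨∃ p : Set ℕ, x ∈ j p, fun _ => ⋂₀ {p : Set ℕ | x ∈ j p}⟩

def mMorphism (e : ℕ) (f g : Multifun) : Prop :=
  ∀ (x : ℕ) (A : Set ℕ), A ∈ f x → ∃ c ∈ ap e x, ∃ B ∈ g c, B ⊆ A

def rMorphism (e : ℕ) (j k : Set ℕ → Set ℕ) : Prop :=
  ∀ p : Set ℕ, e ∈ imp (j p) (k p)

def rRed (j k : Set ℕ → Set ℕ) : Prop := ∃ e : ℕ, rMorphism e j k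


open Nat.Partrec (Code)
open Nat.Partrec.Code

-- helpers
lemma ap_partrec : Partrec₂ ap :=
  eval_part.comp ((Computable.ofNat _).comp Computable.fst) Computable.snd

lemma ap_code {f : ℕ →. ℕ} (hf : Partrec f) : ∃ e : ℕ, ∀ x, ap e x = f x := by
  obtain ⟨c, hc⟩ := exists_code.1 (Partrec.nat_iff.1 hf)
  exact ⟨Encodable.encode c, fun x => by simp [ap, hc]⟩

lemma ap_encode (c : Code) (x : ℕ) : ap (Encodable.encode c) x = eval c x := by
  simp [ap]

def tcode (e k : ℕ) : ℕ :=
  Encodable.encode (Code.comp (Denumerable.ofNat Code e) (Denumerable.ofNat Code k))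

lemma tcode_eval (e k v : ℕ) : ap (tcode e k) v = (ap k v).bind (ap e) := by
  simp only [tcode, ap_encode, eval]; rfl

def tF (p : ℕ) : ℕ :=
  Nat.pair p.unpair.2.unpair.1
    (Nat.pair (tcode p.unpair.1 p.unpair.2.unpair.2.unpair.1) p.unpair.2.unpair.2.unpair.2)

lemma tF_computable : Computable tF := by
  have h1 : Primrec fun n : ℕ => n.unpair.1 := Primrec.fst.comp Primrec.unpair
  have h2 : Primrec fun n : ℕ => n.unpair.2 := Primrec.snd.comp Primrec.unpair
  have htc : Primrec₂ tcode :=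
    Primrec.encode.comp <| primrec₂_comp.comp ((Primrec.ofNat Code).comp Primrec.fst)
      ((Primrec.ofNat Code).comp Primrec.snd)
  exact Primrec.to_comp <| Primrec₂.natPair.comp (h1.comp h2)
    (Primrec₂.natPair.comp (htc.comp h1 (h1.comp (h2.comp h2))) (h2.comp (h2.comp h2)))

def emFun (m : ℕ) : ℕ →. ℕ := fun x =>
  (ap m x).bind fun w => ap w.unpair.1 w.unpair.2.unpair.2

lemma emFun_partrec (m : ℕ) : Partrec (emFun m) := by
  have h1 : Primrec fun n : ℕ => n.unpair.1 := Primrec.fst.comp Primrec.unpair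
  have h2 : Primrec fun n : ℕ => n.unpair.2 := Primrec.snd.comp Primrec.unpair
  exact (ap_partrec.comp (Computable.const m) Computable.id).bind
    ((ap_partrec.comp (h1.comp Primrec.snd).to_comp ((h2.comp (h2.comp Primrec.snd)).to_comp)).to₂)

def epFun (m : ℕ) : ℕ →. ℕ := fun v =>
  (ap m v.unpair.1).bind fun w =>
    ap w.unpair.2.unpair.1 (Nat.pair w.unpair.2.unpair.2 v.unpair.2)

lemma epFun_partrec (m : ℕ) : Partrec (epFun m) := by
  have h1 : Primrec fun n : ℕ => n.unpair.1 := Primrec.fst.comp Primrec.unpair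
  have h2 : Primrec fun n : ℕ => n.unpair.2 := Primrec.snd.comp Primrec.unpair
  exact (ap_partrec.comp (Computable.const m) h1.to_comp).bind
    ((ap_partrec.comp ((h1.comp (h2.comp Primrec.snd)).to_comp)
      ((Primrec₂.natPair.comp (h2.comp (h2.comp Primrec.snd))
        (h2.comp Primrec.fst)).to_comp)).to₂)


/-- For every partial multifunction `g` on ℕ, `Weih g` is computably
transparent, and for every partial multifunction `f`, `f ≤_W g ↔ f ≤_m Weih g`. -/
theorem weih_transparent_and_universal (g : Multifun) :
    Transparent (Weih g) ∧ ∀ f : Multifun, (wRed f g ↔ mRed f (Weih g)) := by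
  constructor
  · -- transparency
    obtain ⟨cF, hcF⟩ := exists_code.1 (Partrec.nat_iff.1 tF_computable.partrec)
    obtain ⟨cu, hcu⟩ := ap_code (f := fun e => Part.some (Encodable.encode (curry cF e)))
      (Computable.partrec <| Primrec.to_comp <|
        Primrec.encode.comp (primrec₂_curry.comp (Primrec.const cF) Primrec.id))
    refine ⟨cu, fun e x A hA hAe => ?_⟩
    simp only [Weih, Part.mem_mk_iff] at hA
    obtain ⟨⟨c₀, hc₀, B₀, hB₀, hDom⟩, rfl⟩ := hA
    refine ⟨Encodable.encode (curry cF e), by rw [hcu]; exact Part.mem_some _,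
      tF (Nat.pair e x), ?_, ?_⟩
    · rw [ap_encode, eval_curry, hcF]; exact Part.mem_some _
    · have hd : tF (Nat.pair e x) =
        Nat.pair x.unpair.1 (Nat.pair (tcode e x.unpair.2.unpair.1) x.unpair.2.unpair.2) := by
        simp [tF, Nat.unpair_pair]
      rw [hd]
      simp only [Weih, Part.mem_mk_iff, Nat.unpair_pair]
      have memA : ∀ y ∈ B₀, ∀ z ∈ ap x.unpair.2.unpair.1 (Nat.pair x.unpair.2.unpair.2 y),
          z ∈ {z | ∃ c ∈ ap x.unpair.1 x.unpair.2.unpair.2, ∃ B ∈ g c, ∃ y ∈ B,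
            z ∈ ap x.unpair.2.unpair.1 (Nat.pair x.unpair.2.unpair.2 y)} :=
        fun y hy z hz => ⟨c₀, hc₀, B₀, hB₀, y, hy, hz⟩
    -- dom of new Weih input
      have hdom : ∀ y ∈ B₀, (ap (tcode e x.unpair.2.unpair.1)
          (Nat.pair x.unpair.2.unpair.2 y)).Dom := by
        intro y hy
        rw [tcode_eval]
        obtain ⟨z, hz⟩ := Part.dom_iff_mem.1 (hDom y hy)
        obtain ⟨z', hz'⟩ := Part.dom_iff_mem.1 (hAe z (memA y hy z hz))
        exact Part.dom_iff_mem.2 ⟨z', Part.mem_bind_iff.2 ⟨z, hz, hz'⟩⟩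
      refine ⟨_, ⟨⟨c₀, hc₀, B₀, hB₀, hdom⟩, rfl⟩, ?_⟩
      intro z hz
      obtain ⟨c₁, hc₁, B₁, hB₁, y, hy, hzk⟩ := hz
      obtain rfl : c₁ = c₀ := Part.mem_unique hc₁ hc₀
      obtain rfl : B₁ = B₀ := Part.mem_unique hB₁ hB₀
      rw [tcode_eval] at hzk
      obtain ⟨a, ha, hza⟩ := Part.mem_bind_iff.1 hzk
      exact ⟨a, memA y hy a ha, hza⟩
  · intro f
    constructor
    · rintro ⟨em, ep, hred⟩
      obtain ⟨m, hm⟩ := ap_code (f := fun x => Part.some (Nat.pair em (Nat.pair ep x)))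
        (Computable.partrec <| Primrec.to_comp <|
          Primrec₂.natPair.comp (Primrec.const em)
            (Primrec₂.natPair.comp (Primrec.const ep) Primrec.id))
      refine ⟨m, fun x A hA => ?_⟩
      obtain ⟨c, hc, B, hB, hy⟩ := hred x A hA
      refine ⟨Nat.pair em (Nat.pair ep x), by rw [hm]; exact Part.mem_some _, ?_⟩
      simp only [Weih, Part.mem_mk_iff, Nat.unpair_pair]
      refine ⟨_, ⟨⟨c, hc, B, hB, fun y hyB => ?_⟩, rfl⟩, ?_⟩
      · obtain ⟨z, hz, _⟩ := hy y hyB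
        exact Part.dom_iff_mem.2 ⟨z, hz⟩
      · intro z hz
        obtain ⟨c₁, hc₁, B₁, hB₁, y, hyB, hzz⟩ := hz
        obtain rfl : c₁ = c := Part.mem_unique hc₁ hc
        obtain rfl : B₁ = B := Part.mem_unique hB₁ hB
        obtain ⟨z₀, hz₀, hz₀A⟩ := hy y hyB
        rwa [Part.mem_unique hzz hz₀]
    · rintro ⟨m, hred⟩
      obtain ⟨cem, hcem⟩ := ap_code (emFun_partrec m)
      obtain ⟨cep, hcep⟩ := ap_code (epFun_partrec m)
      refine ⟨cem, cep, fun x A hA => ?_⟩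
      obtain ⟨w, hw, B, hB, hBA⟩ := hred x A hA
      simp only [Weih, Part.mem_mk_iff] at hB
      obtain ⟨⟨c₀, hc₀, B₀, hB₀, hDom⟩, rfl⟩ := hB
      refine ⟨c₀, ?_, B₀, hB₀, fun y hy => ?_⟩
      · rw [hcem]
        exact Part.mem_bind_iff.2 ⟨w, hw, hc₀⟩
      · have hd := hDom y hy
        obtain ⟨z, hz⟩ := Part.dom_iff_mem.1 hd
        refine ⟨z, ?_, hBA ⟨c₀, hc₀, B₀, hB₀, y, hy, hz⟩⟩
        rw [hcep]
        simp only [epFun, Nat.unpair_pair]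
        exact Part.mem_bind_iff.2 ⟨w, hw, hz⟩


end KleeneOracle
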